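/- Let W = W(Γ) be the right-angled Coxeter group of a simple graph Γ with word length ℓ. Let w₁, w₂, w₃, v₁, v₂ ∈ W satisfy ℓ(w₁·w₂·w₃) = ℓ(w₁) + ℓ(w₂) + ℓ(w₃), ℓ(v₁·v₂) = ℓ(v₁) + ℓ(v₂), ℓ(v₁) = ℓ(w₂·w₃) + ℓ(w₂·w₃·v₁), and ℓ(w₁·w₃·v₁·v₂) = ℓ(w₁) + ℓ(w₃·v₁·v₂). Then ℓ(w₁·w₃·v₁) = ℓ(w₁) + ℓ(w₃·v₁) and ℓ(w₁·w₃·v₁·v₂) = ℓ(w₁·w₃·v₁) + ℓ(v₂). -/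

import Mathlib

namespace RACG

variable {V : Type*} [DecidableEq V]

/-- The right-angled Coxeter matrix of a simple graph `G`: diagonal entries are `1`,
entries at adjacent pairs are `2` (the generators commute), and entries at distinct
non-adjacent pairs are `0` (representing `∞`, i.e. no relation). -/
def racgMatrix (G : SimpleGraph V) [DecidableRel G.Adj] : CoxeterMatrix V where
  M a b := if a = b then 1 else if G.Adj a b then 2 else 0
  isSymm := by
    refine Matrix.ext fun a b => ?_
    show (if b = a then (1 : ℕ) else if G.Adj b a then 2 else 0) =
      (if a = b then 1 else if G.Adj a b then 2 else 0)
    by_cases h : a = b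
    · subst h; rfl
    · rw [if_neg h, if_neg (Ne.symm h)]
      by_cases hadj : G.Adj a b
      · rw [if_pos hadj, if_pos hadj.symm]
      · rw [if_neg hadj, if_neg (fun h' => hadj h'.symm)]
  diagonal := fun i => by simp
  off_diagonal := fun i i' h => by
    show (if i = i' then (1 : ℕ) else if G.Adj i i' then 2 else 0) ≠ 1
    rw [if_neg h]
    by_cases hadj : G.Adj i i' <;> simp [hadj]

variable {G : SimpleGraph V} [DecidableRel G.Adj] {W : Type*} [Group W]

/-- In the right-angled Coxeter group of `G`, the simple reflections at adjacent
vertices commute. -/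
theorem simple_commute_of_adj (cs : CoxeterSystem (racgMatrix G) W) {a b : V}
    (h : G.Adj a b) : Commute (cs.simple a) (cs.simple b) := by
  have hM : (racgMatrix G) a b = 2 := by
    simp only [racgMatrix, if_neg h.ne, if_pos h]
  have h2 := cs.simple_mul_simple_pow a b
  rw [hM, pow_two] at h2
  have h3 := mul_eq_one_iff_eq_inv.mp h2
  rwa [mul_inv_rev, cs.inv_simple, cs.inv_simple] at h3

/-- The clique word associated to a finite set `C` of pairwise adjacent vertices:
the product of the simple reflections at the vertices of `C` (in any order; these
commute). If `C` is not a clique, we set the value to `1` by convention. -/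
noncomputable def cliqueWord (cs : CoxeterSystem (racgMatrix G) W) (C : Finset V) : W :=
  if h : (C : Set V).Pairwise G.Adj then
    C.noncommProd (fun v => cs.simple v)
      (fun _ ha _ hb hab => simple_commute_of_adj cs (h ha hb hab))
  else 1

/-- `w` is a clique word if it is the product of the simple reflections over a finite
set of pairwise adjacent vertices. -/
def IsCliqueWord (cs : CoxeterSystem (racgMatrix G) W) (w : W) : Prop :=
  ∃ C : Finset V, (C : Set V).Pairwise G.Adj ∧ w = cliqueWord cs C

end RACG

theorem length_combined_action
    {V : Type*} [DecidableEq V] (G : SimpleGraph V) [DecidableRel G.Adj]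
    {W : Type*} [Group W] (cs : CoxeterSystem (RACG.racgMatrix G) W)
    (w₁ w₂ w₃ v₁ v₂ : W)
    (h₁ : cs.length (w₁ * w₂ * w₃) = cs.length w₁ + cs.length w₂ + cs.length w₃)
    (h₂ : cs.length (v₁ * v₂) = cs.length v₁ + cs.length v₂)
    (h₃ : cs.length v₁ = cs.length (w₂ * w₃) + cs.length (w₂ * w₃ * v₁))
    (h₄ : cs.length (w₁ * w₃ * v₁ * v₂) = cs.length w₁ + cs.length (w₃ * v₁ * v₂)) :
    cs.length (w₁ * w₃ * v₁) = cs.length w₁ + cs.length (w₃ * v₁) ∧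
      cs.length (w₁ * w₃ * v₁ * v₂) = cs.length (w₁ * w₃ * v₁) + cs.length v₂ := by
  have key : ∀ x y : W, cs.length y ≤ cs.length x + cs.length (x * y) := by
    intro x y
    have := cs.length_mul_le x⁻¹ (x * y)
    simpa [cs.length_inv] using this
  -- ℓ(w₂w₃) = ℓ(w₂) + ℓ(w₃)
  have e1 : cs.length (w₁ * (w₂ * w₃)) = cs.length (w₁ * w₂ * w₃) := by rw [mul_assoc]
  have i1 : cs.length (w₁ * w₂ * w₃) ≤ cs.length w₁ + cs.length (w₂ * w₃) := by
    rw [← e1]; exact cs.length_mul_le w₁ (w₂ * w₃)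
  have i2 : cs.length (w₂ * w₃) ≤ cs.length w₂ + cs.length w₃ := cs.length_mul_le w₂ w₃
  -- ℓ(w₃v₁) ≤ ℓ(w₂) + ℓ(w₂w₃v₁)
  have e2 : w₂ * (w₃ * v₁) = w₂ * w₃ * v₁ := by group
  have i3 : cs.length (w₃ * v₁) ≤ cs.length w₂ + cs.length (w₂ * w₃ * v₁) := by
    have := key w₂ (w₃ * v₁); rwa [e2] at this
  -- ℓ(v₁) ≤ ℓ(w₃) + ℓ(w₃v₁)
  have i4 : cs.length v₁ ≤ cs.length w₃ + cs.length (w₃ * v₁) := key w₃ v₁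
  -- ℓ(v₁v₂) ≤ ℓ(w₃) + ℓ(w₃v₁v₂)
  have e3 : w₃ * (v₁ * v₂) = w₃ * v₁ * v₂ := by group
  have i5 : cs.length (v₁ * v₂) ≤ cs.length w₃ + cs.length (w₃ * v₁ * v₂) := by
    have := key w₃ (v₁ * v₂); rwa [e3] at this
  have i6 : cs.length (w₃ * v₁ * v₂) ≤ cs.length (w₃ * v₁) + cs.length v₂ :=
    cs.length_mul_le (w₃ * v₁) v₂
  have i7 : cs.length (w₁ * w₃ * v₁ * v₂) ≤ cs.length (w₁ * w₃ * v₁) + cs.length v₂ :=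
    cs.length_mul_le (w₁ * w₃ * v₁) v₂
  have e4 : w₁ * (w₃ * v₁) = w₁ * w₃ * v₁ := by group
  have i8 : cs.length (w₁ * w₃ * v₁) ≤ cs.length w₁ + cs.length (w₃ * v₁) := by
    have := cs.length_mul_le w₁ (w₃ * v₁); rwa [e4] at this
  omega
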